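/- arXiv:2004.06847 — 2 statements merged into one kernel-verified Lean document; each statement's English description precedes it below -/
import Mathlib

section
/- Let H be a dense subgroup of (ℝ,+), let T : ℝⁿ → ℝ be a ℤ-linear map T(t₁,…,tₙ) = k₁t₁ + … + kₙtₙ with integer coefficients, and let s ∈ ℝ. Then the closure in ℝⁿ of the set {a ∈ Hⁿ : T(a) ≤ s} is {a ∈ ℝⁿ : T(a) ≤ s}, provided the set {a ∈ Hⁿ : T(a) ≤ s} is nonempty and T is not identically zero. -/
open Set

/-- Let `H` be a dense subgroup of `(ℝ, +)` and `T(a) = k₁a₁ + … + kₙaₙ` a nonzero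
`ℤ`-linear map. If `{a ∈ Hⁿ : T(a) ≤ s}` is nonempty, then its closure in `ℝⁿ` is the
half-space `{a ∈ ℝⁿ : T(a) ≤ s}`. -/
theorem closure_halfspace_trace (H : AddSubgroup ℝ) (hH : Dense (H : Set ℝ))
    (n : ℕ) (k : Fin n → ℤ) (hk : k ≠ 0) (s : ℝ)
    (hne : {a : Fin n → ℝ | (∀ i, a i ∈ H) ∧ ∑ i, (k i : ℝ) * a i ≤ s}.Nonempty) :
    closure {a : Fin n → ℝ | (∀ i, a i ∈ H) ∧ ∑ i, (k i : ℝ) * a i ≤ s}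
      = {a : Fin n → ℝ | ∑ i, (k i : ℝ) * a i ≤ s} := by
  obtain ⟨i₀, hi₀⟩ := Function.ne_iff.mp hk
  have hk0 : (k i₀ : ℝ) ≠ 0 := by exact_mod_cast hi₀
  have hkpos : 0 < |(k i₀ : ℝ)| := abs_pos.mpr hk0
  apply Subset.antisymm
  · apply closure_minimal
    · intro a ha; exact ha.2
    · exact isClosed_le (by continuity) continuous_const
  · intro b hb
    rw [Metric.mem_closure_iff]
    intro ε hε
    set C : ℝ := ∑ i ∈ Finset.univ.erase i₀, |(k i : ℝ)| with hC
    have hC0 : 0 ≤ C := Finset.sum_nonneg fun i _ => abs_nonneg _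
    have hD : (0:ℝ) < |(k i₀ : ℝ)| + C := by linarith
    set δ : ℝ := ε * |(k i₀ : ℝ)| / (2 * (|(k i₀ : ℝ)| + C)) with hδ
    have hδ0 : 0 < δ := div_pos (mul_pos hε hkpos) (by linarith)
    have hDδ : (|(k i₀ : ℝ)| + C) * δ = ε * |(k i₀ : ℝ)| / 2 := by
      rw [hδ]; field_simp
    have hδ1 : δ ≤ ε / 2 := by nlinarith
    have hδ2 : C * δ / |(k i₀ : ℝ)| ≤ ε / 2 := by
      rw [div_le_iff₀ hkpos]
      nlinarith
    -- choose approximations in H for every coordinate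
    have hg : ∀ i : Fin n, ∃ x ∈ (H : Set ℝ), x ∈ Set.Ioo (b i - δ) (b i + δ) := by
      intro i
      exact hH.exists_mem_open isOpen_Ioo ⟨b i, by constructor <;> linarith⟩
    choose g hg1 hg2 using hg
    set R : ℝ := s - ∑ i ∈ Finset.univ.erase i₀, (k i : ℝ) * g i with hR
    -- key estimate
    have key : ∑ i ∈ Finset.univ.erase i₀, ((k i : ℝ) * g i - (k i : ℝ) * b i) ≤ C * δ := by
      rw [hC, Finset.sum_mul]
      apply Finset.sum_le_sum
      intro i _
      have h1 := (hg2 i).1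
      have h2 := (hg2 i).2
      have habs : |g i - b i| ≤ δ := by
        rw [abs_le]; constructor <;> linarith
      calc (k i : ℝ) * g i - (k i : ℝ) * b i = (k i : ℝ) * (g i - b i) := by ring
        _ ≤ |(k i : ℝ) * (g i - b i)| := le_abs_self _
        _ = |(k i : ℝ)| * |g i - b i| := abs_mul _ _
        _ ≤ |(k i : ℝ)| * δ := mul_le_mul_of_nonneg_left habs (abs_nonneg _)
    have hsum_b : (k i₀ : ℝ) * b i₀ + ∑ i ∈ Finset.univ.erase i₀, (k i : ℝ) * b i
        = ∑ i, (k i : ℝ) * b i := Finset.add_sum_erase _ (fun i => (k i : ℝ) * b i) (Finset.mem_univ i₀)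
    have hsub : ∑ i ∈ Finset.univ.erase i₀, ((k i : ℝ) * g i - (k i : ℝ) * b i)
        = (∑ i ∈ Finset.univ.erase i₀, (k i : ℝ) * g i)
          - ∑ i ∈ Finset.univ.erase i₀, (k i : ℝ) * b i := Finset.sum_sub_distrib _ _
    have hkb : (k i₀ : ℝ) * b i₀ ≤ R + C * δ := by
      have hb' : ∑ i, (k i : ℝ) * b i ≤ s := hb
      rw [hsub] at key
      rw [hR]
      linarith
    -- find t with  k i₀ * t ≤ R  and  t close to b i₀
    obtain ⟨t, ht1, ht2⟩ : ∃ t : ℝ, (k i₀ : ℝ) * t ≤ R ∧ |t - b i₀| ≤ C * δ / |(k i₀ : ℝ)| := by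
      by_cases hle : (k i₀ : ℝ) * b i₀ ≤ R
      · exact ⟨b i₀, hle, by simp; positivity⟩
      · refine ⟨R / (k i₀ : ℝ), le_of_eq (mul_div_cancel₀ _ hk0), ?_⟩
        have h1 : R / (k i₀ : ℝ) - b i₀ = (R - (k i₀ : ℝ) * b i₀) / (k i₀ : ℝ) := by
          field_simp
        rw [h1, abs_div]
        gcongr
        rw [abs_le]
        constructor <;> [linarith [le_abs_self ((k i₀ : ℝ) * b i₀ - R), neg_abs_le ((k i₀ : ℝ) * b i₀ - R)]; skip]
        · push_neg at hle
          have : |R - (k i₀ : ℝ) * b i₀| = (k i₀ : ℝ) * b i₀ - R := by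
            rw [abs_sub_comm, abs_of_pos]; linarith
          linarith [le_abs_self (R - (k i₀ : ℝ) * b i₀), hkb, this]
    -- pick a₀ ∈ H near t with k i₀ * a₀ < k i₀ * t (≤ R)
    have hOopen : IsOpen (Set.Ioo (t - δ/2) (t + δ/2) ∩ {x : ℝ | (k i₀ : ℝ) * x < (k i₀ : ℝ) * t}) :=
      isOpen_Ioo.inter (isOpen_lt (continuous_const.mul continuous_id) continuous_const)
    have hOne : (Set.Ioo (t - δ/2) (t + δ/2) ∩ {x : ℝ | (k i₀ : ℝ) * x < (k i₀ : ℝ) * t}).Nonempty := by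
      rcases lt_or_gt_of_ne hk0 with hneg | hpos
      · exact ⟨t + δ/4, ⟨by linarith, by linarith⟩, by simp only [Set.mem_setOf_eq]; nlinarith⟩
      · exact ⟨t - δ/4, ⟨by linarith, by linarith⟩, by simp only [Set.mem_setOf_eq]; nlinarith⟩
    obtain ⟨a₀, ha₀H, ha₀I, ha₀lt⟩ := hH.exists_mem_open hOopen hOne
    refine ⟨Function.update g i₀ a₀, ⟨?_, ?_⟩, ?_⟩
    · -- coordinates in H
      intro i
      by_cases h : i = i₀
      · subst h; simpa using ha₀H
      · rw [Function.update_of_ne h]; exact hg1 i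
    · -- the sum is ≤ s
      have hsplit : ∑ i, (k i : ℝ) * Function.update g i₀ a₀ i
          = (k i₀ : ℝ) * a₀ + ∑ i ∈ Finset.univ.erase i₀, (k i : ℝ) * g i := by
        rw [← Finset.add_sum_erase _ _ (Finset.mem_univ i₀)]
        congr 1
        · simp
        · exact Finset.sum_congr rfl fun i hi => by
            rw [Function.update_of_ne (Finset.ne_of_mem_erase hi)]
      rw [hsplit]
      have : (k i₀ : ℝ) * a₀ ≤ R := le_of_lt (lt_of_lt_of_le ha₀lt ht1)
      rw [hR] at this
      linarith
    · -- distance bound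
      rw [dist_comm, dist_pi_lt_iff hε]
      intro i
      rw [Real.dist_eq]
      by_cases h : i = i₀
      · rw [h, Function.update_self]
        have h1 : |a₀ - t| < δ / 2 := by
          rw [abs_sub_lt_iff]
          exact ⟨by linarith [ha₀I.2], by linarith [ha₀I.1]⟩
        calc |a₀ - b i₀| ≤ |a₀ - t| + |t - b i₀| := abs_sub_le _ _ _
          _ < δ / 2 + C * δ / |(k i₀ : ℝ)| := by linarith
          _ ≤ ε / 4 + ε / 2 := by linarith
          _ < ε := by linarith
      · rw [Function.update_of_ne h]
        have h1 := (hg2 i).1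
        have h2 := (hg2 i).2
        rw [abs_sub_lt_iff]
        constructor <;> linarith
end

section
/- Let α, β ∈ ℝ/ℤ be irrational. If the cyclic orders C_α and C_β on ℤ coincide (where C_α(k,k',k'') holds iff C(kα, k'α, k''α) for the standard cyclic order C on ℝ/ℤ), then α = β. -/
open Set

/-- The standard cyclic order on `ℝ/ℤ`: for representatives `t, t', t'' ∈ [0,1)`,
`C(t+ℤ, t'+ℤ, t''+ℤ)` holds iff `t < t' < t''` or `t' < t'' < t` or `t'' < t < t'`. -/
def stdCyclic (x y z : AddCircle (1 : ℝ)) : Prop :=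
  ∃ t t' t'' : ℝ, t ∈ Ico (0 : ℝ) 1 ∧ t' ∈ Ico (0 : ℝ) 1 ∧ t'' ∈ Ico (0 : ℝ) 1 ∧
    x = (t : AddCircle (1 : ℝ)) ∧ y = (t' : AddCircle (1 : ℝ)) ∧
    z = (t'' : AddCircle (1 : ℝ)) ∧
    ((t < t' ∧ t' < t'') ∨ (t' < t'' ∧ t'' < t) ∨ (t'' < t ∧ t < t'))

lemma coe_fract_eq (r : ℝ) : ((Int.fract r : ℝ) : AddCircle (1 : ℝ)) = (r : AddCircle (1 : ℝ)) := by
  rw [Int.fract, AddCircle.coe_sub, sub_eq_self]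
  exact (AddCircle.coe_eq_zero_iff _).mpr ⟨⌊r⌋, by simp⟩

lemma coe_inj01 {x y : ℝ} (hx : x ∈ Ico (0:ℝ) 1) (hy : y ∈ Ico (0:ℝ) 1)
    (h : (x : AddCircle (1:ℝ)) = (y : AddCircle (1:ℝ))) : x = y := by
  haveI : Fact ((0:ℝ) < 1) := ⟨zero_lt_one⟩
  have hx' : x ∈ Ico (0:ℝ) (0 + 1) := by rwa [zero_add]
  have hy' : y ∈ Ico (0:ℝ) (0 + 1) := by rwa [zero_add]
  exact (AddCircle.coe_eq_coe_iff_of_mem_Ico hx' hy').mp h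

lemma stdCyclic_zero_iff {a : ℝ} (ha : Irrational a) (h0 : 0 < a) (h1 : a < 1)
    {k : ℤ} (hk : k ≠ 0) :
    stdCyclic (0 : AddCircle (1:ℝ)) (((k : ℝ) * a : ℝ) : AddCircle (1:ℝ))
      ((a : ℝ) : AddCircle (1:ℝ)) ↔ Int.fract ((k : ℝ) * a) < a := by
  have hka : Irrational ((k : ℝ) * a) := ha.intCast_mul hk
  have hfr : 0 < Int.fract ((k : ℝ) * a) := by
    rcases lt_or_eq_of_le (Int.fract_nonneg ((k : ℝ) * a)) with h | h
    · exact h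
    · exfalso
      refine hka.ne_int ⌊(k : ℝ) * a⌋ ?_
      have h2 := Int.self_sub_floor ((k : ℝ) * a)
      rw [← h] at h2
      linarith
  have hmem : Int.fract ((k : ℝ) * a) ∈ Ico (0:ℝ) 1 :=
    ⟨Int.fract_nonneg _, Int.fract_lt_one _⟩
  have hmema : a ∈ Ico (0:ℝ) 1 := ⟨h0.le, h1⟩
  constructor
  · rintro ⟨t, t', t'', ht, ht', ht'', hx, hy, hz, hord⟩
    have ht0 : t = 0 := by
      refine (coe_inj01 ht (by norm_num) ?_)
      rw [← hx]; norm_cast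
    have ht'e : t' = Int.fract ((k : ℝ) * a) := by
      refine coe_inj01 ht' hmem ?_
      rw [← hy, coe_fract_eq]
    have ht''e : t'' = a := coe_inj01 ht'' hmema (by rw [← hz])
    subst ht0 ht'e ht''e
    rcases hord with ⟨_, hlt⟩ | ⟨_, hlt⟩ | ⟨hlt, _⟩ <;> linarith
  · intro hlt
    exact ⟨0, Int.fract ((k : ℝ) * a), a, by norm_num, hmem, hmema,
      by norm_cast, (coe_fract_eq _).symm, rfl, Or.inl ⟨hfr, hlt⟩⟩

lemma count_eq_floor (a : ℝ) (h0 : 0 < a) (h1 : a < 1) (n : ℕ) :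
    ((((Finset.Icc 1 n).filter (fun k : ℕ => Int.fract ((k : ℝ) * a) < a)).card : ℤ))
      = ⌊(n : ℝ) * a⌋ := by
  induction n with
  | zero => simp
  | succ n ih =>
    have hx : ((n : ℝ) + 1) * a = (n : ℝ) * a + a := by ring
    set x := (n : ℝ) * a with hxdef
    have hle : ⌊x + a⌋ ≤ ⌊x⌋ + 1 := by
      have : x + a < (⌊x⌋ + 1 : ℤ) + 1 := by
        have := Int.lt_floor_add_one x
        push_cast
        linarith
      have h2 : ⌊x + a⌋ < ⌊x⌋ + 2 := by
        apply Int.floor_lt.mpr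
        have := Int.lt_floor_add_one x
        push_cast
        linarith
      omega
    have hge : ⌊x⌋ ≤ ⌊x + a⌋ := Int.floor_le_floor (by linarith)
    have key : Int.fract (x + a) < a ↔ ⌊x + a⌋ = ⌊x⌋ + 1 := by
      constructor
      · intro hf
        have : (⌊x + a⌋ : ℝ) > x := by
          have : x + a - ⌊x + a⌋ < a := hf
          linarith
        have h2 : ⌊x⌋ + 1 ≤ ⌊x + a⌋ := by
          have := Int.floor_le x
          have : (⌊x⌋ : ℝ) < ⌊x + a⌋ := by linarith [Int.floor_le x]
          exact_mod_cast Int.add_one_le_iff.mpr (by exact_mod_cast this)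
        omega
      · intro hf
        have heq : Int.fract (x + a) = x + a - ((⌊x⌋ + 1 : ℤ) : ℝ) := by
          rw [← hf, Int.self_sub_floor]
        rw [heq]
        push_cast
        have := Int.floor_le x
        linarith [Int.lt_floor_add_one x]
    have hsplit : Finset.Icc 1 (n + 1) = insert (n + 1) (Finset.Icc 1 n) := by
      exact (Finset.insert_Icc_right_eq_Icc_add_one (by omega)).symm
    rw [hsplit, Finset.filter_insert]
    by_cases hc : Int.fract (((n : ℝ) + 1) * a) < a
    · rw [if_pos (by push_cast; exact hc)]
      rw [Finset.card_insert_of_notMem (by simp)]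
      push_cast
      rw [ih]
      rw [hx] at hc
      have := key.mp hc
      push_cast [hx]
      omega
    · rw [if_neg (by push_cast; exact hc)]
      rw [ih]
      rw [hx] at hc
      have h2 : ⌊x + a⌋ ≠ ⌊x⌋ + 1 := fun hh => hc (key.mpr hh)
      have h3 : ⌊x + a⌋ = ⌊x⌋ := by omega
      push_cast [hx]
      omega

/-- If `α, β ∈ ℝ/ℤ` are irrational and the pullback cyclic orders `C_α` and `C_β` on `ℤ`
coincide, then `α = β`. -/
theorem cyclic_order_determines_alpha (α β : AddCircle (1 : ℝ))
    (hα : ∃ s : ℝ, Irrational s ∧ (s : AddCircle (1 : ℝ)) = α)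
    (hβ : ∃ s : ℝ, Irrational s ∧ (s : AddCircle (1 : ℝ)) = β)
    (h : ∀ k k' k'' : ℤ,
      stdCyclic (k • α) (k' • α) (k'' • α) ↔ stdCyclic (k • β) (k' • β) (k'' • β)) :
    α = β := by
  obtain ⟨s, hs, hsα⟩ := hα
  obtain ⟨u, hu, huβ⟩ := hβ
  set a := Int.fract s with hadef
  set b := Int.fract u with hbdef
  have hairr : Irrational a := by
    rw [hadef, Int.fract]; exact hs.sub_intCast _
  have hbirr : Irrational b := by
    rw [hbdef, Int.fract]; exact hu.sub_intCast _
  have ha0 : 0 < a :=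
    (Int.fract_nonneg s).lt_of_ne (fun hh => hairr.ne_int 0 (by exact_mod_cast hh.symm))
  have ha1 : a < 1 := Int.fract_lt_one s
  have hb0 : 0 < b :=
    (Int.fract_nonneg u).lt_of_ne (fun hh => hbirr.ne_int 0 (by exact_mod_cast hh.symm))
  have hb1 : b < 1 := Int.fract_lt_one u
  have hacoe : ((a : ℝ) : AddCircle (1:ℝ)) = α := by rw [hadef, coe_fract_eq, hsα]
  have hbcoe : ((b : ℝ) : AddCircle (1:ℝ)) = β := by rw [hbdef, coe_fract_eq, huβ]
  -- translate hypothesis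
  have key : ∀ k : ℕ, k ≠ 0 →
      (Int.fract ((k : ℝ) * a) < a ↔ Int.fract ((k : ℝ) * b) < b) := by
    intro k hk
    have hk' : (k : ℤ) ≠ 0 := by exact_mod_cast hk
    have h1 := h 0 (k : ℤ) 1
    rw [zero_zsmul, zero_zsmul, one_zsmul, one_zsmul] at h1
    have hα' : (k : ℤ) • α = (((k : ℝ) * a : ℝ) : AddCircle (1:ℝ)) := by
      rw [← hacoe, ← AddCircle.coe_zsmul]
      norm_cast
      push_cast [zsmul_eq_mul]
      ring_nf
    have hβ' : (k : ℤ) • β = (((k : ℝ) * b : ℝ) : AddCircle (1:ℝ)) := by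
      rw [← hbcoe, ← AddCircle.coe_zsmul]
      push_cast [zsmul_eq_mul]
      ring_nf
    rw [hα', hβ', ← hacoe, ← hbcoe] at h1
    have sa := stdCyclic_zero_iff hairr ha0 ha1 hk'
    have sb := stdCyclic_zero_iff hbirr hb0 hb1 hk'
    push_cast at sa sb
    rw [← sa, ← sb]
    exact h1
  -- floors agree
  have floors : ∀ n : ℕ, ⌊(n : ℝ) * a⌋ = ⌊(n : ℝ) * b⌋ := by
    intro n
    rw [← count_eq_floor a ha0 ha1 n, ← count_eq_floor b hb0 hb1 n]
    congr 2
    apply Finset.filter_congr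
    intro k hk
    simp only [Finset.mem_Icc] at hk
    simpa using key k (by omega)
  -- conclude a = b
  have hab : a = b := by
    by_contra hne
    have habs : ∀ n : ℕ, |(n : ℝ) * a - (n : ℝ) * b| < 1 := by
      intro n
      have e1 : (n : ℝ) * a - ⌊(n:ℝ)*a⌋ = Int.fract ((n:ℝ)*a) := Int.self_sub_floor _
      have e2 : (n : ℝ) * b - ⌊(n:ℝ)*b⌋ = Int.fract ((n:ℝ)*b) := Int.self_sub_floor _
      have := floors n
      have f1 := Int.fract_nonneg ((n:ℝ)*a)
      have f2 := Int.fract_lt_one ((n:ℝ)*a)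
      have f3 := Int.fract_nonneg ((n:ℝ)*b)
      have f4 := Int.fract_lt_one ((n:ℝ)*b)
      have hcast : ((⌊(n:ℝ)*a⌋ : ℝ)) = ((⌊(n:ℝ)*b⌋ : ℝ)) := by exact_mod_cast this
      rw [abs_lt]
      constructor <;> linarith
    have hd : 0 < |a - b| := abs_pos.mpr (sub_ne_zero.mpr hne)
    obtain ⟨n, hn⟩ := exists_nat_gt (1 / |a - b|)
    have hn' : 1 / |a - b| < n := hn
    have : 1 < (n : ℝ) * |a - b| := by
      rw [div_lt_iff₀ hd] at hn'
      linarith [mul_comm (n : ℝ) |a - b|]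
    have h2 := habs n
    rw [← mul_sub, abs_mul, abs_of_nonneg (by positivity : (0:ℝ) ≤ (n:ℝ))] at h2
    linarith
  rw [← hacoe, ← hbcoe, hab]
end
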